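/- Let k be a positive integer and let S_{k,k} be the symmetric double star graph with central vertices u and v (the two adjacent vertices of degree k+1). Then for every real time τ there is no perfect state transfer from u to v at time τ. -/

import Mathlib

open Matrix

noncomputable section

/-- Vertex set of the double star `S_{k,ℓ}`: `Sum.inl 0` is the centre `u`,
`Sum.inl 1` the centre `v`, `Sum.inr (Sum.inl i)` are the pendant neighbours of `u`,
and `Sum.inr (Sum.inr j)` are the pendant neighbours of `v`. -/
abbrev DSVertex (k l : ℕ) := (Fin 2) ⊕ (Fin k ⊕ Fin l)

/-- The double star graph `S_{k,ℓ}`: the centres `u = Sum.inl 0` and `v = Sum.inl 1` are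
adjacent, `u` is adjacent to its `k` pendant vertices and `v` to its `ℓ` pendant vertices. -/
def doubleStar (k l : ℕ) : SimpleGraph (DSVertex k l) :=
  SimpleGraph.fromRel (fun a b =>
    (a = Sum.inl 0 ∧ b = Sum.inl 1) ∨
    (∃ i : Fin k, a = Sum.inl 0 ∧ b = Sum.inr (Sum.inl i)) ∨
    (∃ j : Fin l, a = Sum.inl 1 ∧ b = Sum.inr (Sum.inr j)))

instance (k l : ℕ) : DecidableRel (doubleStar k l).Adj := fun _ _ => Classical.dec _

/-- The continuous quantum walk `U(t) = exp(itA)`. -/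
def qWalk {n : Type*} [Fintype n] [DecidableEq n] (A : Matrix n n ℂ) (t : ℝ) :
    Matrix n n ℂ :=
  NormedSpace.exp ((Complex.I * (t : ℂ)) • A)

/-- Perfect state transfer from `a` to `b` at time `τ` for the quantum walk of `A`:
`U(τ) e_a = γ e_b` for some `γ` with `|γ| = 1`. -/
def IsPST {n : Type*} [Fintype n] [DecidableEq n] (A : Matrix n n ℂ) (a b : n) (τ : ℝ) :
    Prop :=
  ∃ γ : ℂ, ‖γ‖ = 1 ∧ (qWalk A τ).mulVec (Pi.single a 1) = γ • (Pi.single b 1 : n → ℂ)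

/- ### Auxiliary machinery -/

open NormedSpace

theorem exp_intertwine {n m : Type*} [Fintype n] [DecidableEq n] [Fintype m] [DecidableEq m]
    (S : Matrix n n ℂ) (T : Matrix m m ℂ) (M : Matrix n m ℂ) (h : S * M = M * T) :
    exp S * M = M * exp T := by
  letI : SeminormedRing (Matrix n n ℂ) := Matrix.linftyOpSemiNormedRing
  letI : NormedRing (Matrix n n ℂ) := Matrix.linftyOpNormedRing
  letI : NormedAlgebra ℂ (Matrix n n ℂ) := Matrix.linftyOpNormedAlgebra
  letI : SeminormedRing (Matrix m m ℂ) := Matrix.linftyOpSemiNormedRing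
  letI : NormedRing (Matrix m m ℂ) := Matrix.linftyOpNormedRing
  letI : NormedAlgebra ℂ (Matrix m m ℂ) := Matrix.linftyOpNormedAlgebra
  have hpow : ∀ j : ℕ, S ^ j * M = M * T ^ j := by
    intro j
    induction j with
    | zero => simp
    | succ j ih =>
      rw [pow_succ, pow_succ, Matrix.mul_assoc, h, ← Matrix.mul_assoc, ih, Matrix.mul_assoc]
  let R : Matrix n n ℂ →ₗ[ℂ] Matrix n m ℂ :=
    { toFun := fun X => X * M
      map_add' := fun X Y => Matrix.add_mul X Y M
      map_smul' := fun c X => Matrix.smul_mul c X M }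
  let L : Matrix m m ℂ →ₗ[ℂ] Matrix n m ℂ :=
    { toFun := fun Y => M * Y
      map_add' := fun X Y => Matrix.mul_add M X Y
      map_smul' := fun c X => Matrix.mul_smul M c X }
  have hR : Continuous R := R.continuous_of_finiteDimensional
  have hL : Continuous L := L.continuous_of_finiteDimensional
  have h1 : HasSum (fun j : ℕ => ((Nat.factorial j : ℂ))⁻¹ • (S ^ j * M)) (exp S * M) := by
    have := (exp_series_hasSum_exp' (𝕂 := ℂ) S).map R hR
    simp [R, Function.comp_def, Matrix.smul_mul] at this
    exact this
  have h2 : HasSum (fun j : ℕ => ((Nat.factorial j : ℂ))⁻¹ • (M * T ^ j)) (M * exp T) := by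
    have := (exp_series_hasSum_exp' (𝕂 := ℂ) T).map L hL
    simp [L, Function.comp_def, Matrix.mul_smul] at this
    exact this
  have heq : (fun j : ℕ => ((Nat.factorial j : ℂ))⁻¹ • (S ^ j * M))
      = fun j => ((Nat.factorial j : ℂ))⁻¹ • (M * T ^ j) := by
    funext j; rw [hpow]
  rw [heq] at h1
  exact h1.unique h2

theorem exp_companion (α β t : ℂ) (h : α ≠ β) :
    exp (t • (!![α + β, -(α * β); 1, 0] : Matrix (Fin 2) (Fin 2) ℂ)) 0 0
      = (α * Complex.exp (t * α) - β * Complex.exp (t * β)) / (α - β) := by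
  have hd : (α - β) ≠ 0 := sub_ne_zero.2 h
  set P : Matrix (Fin 2) (Fin 2) ℂ := !![α, β; 1, 1] with hP
  set Q : Matrix (Fin 2) (Fin 2) ℂ := (α - β)⁻¹ • !![1, -β; -1, α] with hQ
  have hPQ : P * Q = 1 := by
    ext i j
    fin_cases i <;> fin_cases j <;>
      simp [hP, hQ, Matrix.mul_apply, Fin.sum_univ_two] <;> field_simp <;> ring
  have hQP : Q * P = 1 := by
    ext i j
    fin_cases i <;> fin_cases j <;>
      simp [hP, hQ, Matrix.mul_apply, Fin.sum_univ_two] <;> field_simp <;> ring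
  let U : (Matrix (Fin 2) (Fin 2) ℂ)ˣ := ⟨P, Q, hPQ, hQP⟩
  have key : t • (!![α + β, -(α * β); 1, 0] : Matrix (Fin 2) (Fin 2) ℂ)
      = (U : Matrix (Fin 2) (Fin 2) ℂ) * diagonal ![t * α, t * β]
          * (↑U⁻¹ : Matrix (Fin 2) (Fin 2) ℂ) := by
    show _ = P * diagonal ![t * α, t * β] * Q
    ext i j
    fin_cases i <;> fin_cases j <;>
      simp [hP, hQ, Matrix.mul_apply, Fin.sum_univ_two, Matrix.diagonal_apply,
        Matrix.vecMul_diagonal, Matrix.vecHead, Matrix.vecTail] <;> field_simp <;> ring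
  rw [key, Matrix.exp_units_conj, Matrix.exp_diagonal]
  have hexp : exp ![t * α, t * β] = ![Complex.exp (t * α), Complex.exp (t * β)] := by
    rw [Pi.exp_def]
    funext i
    fin_cases i <;> simp [Complex.exp_eq_exp_ℂ]
  rw [hexp]
  show (P * diagonal ![Complex.exp (t * α), Complex.exp (t * β)] * Q) 0 0 = _
  simp [hP, hQ, Matrix.mul_apply, Fin.sum_univ_two, Matrix.diagonal_apply,
    Matrix.vecMul_diagonal, Matrix.vecHead, Matrix.vecTail]
  field_simp
  ring

def svec (k : ℕ) : DSVertex k k → ℂ := Sum.elim (fun _ => 1) (fun _ => 0)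
def pvec (k : ℕ) : DSVertex k k → ℂ := Sum.elim (fun _ => 0) (fun _ => 1)
def dvec (k : ℕ) : DSVertex k k → ℂ := Sum.elim ![1, -1] (fun _ => 0)
def qvec (k : ℕ) : DSVertex k k → ℂ :=
  Sum.elim (fun _ => 0) (Sum.elim (fun _ => 1) (fun _ => -1))

def Ms (k : ℕ) : Matrix (DSVertex k k) (Fin 2) ℂ :=
  Matrix.of fun x j => ![svec k, pvec k] j x
def Md (k : ℕ) : Matrix (DSVertex k k) (Fin 2) ℂ :=
  Matrix.of fun x j => ![dvec k, qvec k] j x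

theorem cardL (k : ℕ) :
    (Finset.filter (fun x : Fin k ⊕ Fin k => ∃ y, x = Sum.inl y) Finset.univ).card = k := by
  have h : Finset.filter (fun x : Fin k ⊕ Fin k => ∃ y, x = Sum.inl y) Finset.univ
      = Finset.univ.map ⟨Sum.inl, Sum.inl_injective⟩ := by
    ext x; cases x <;> simp [eq_comm]
  rw [h, Finset.card_map, Finset.card_univ, Fintype.card_fin]

theorem cardR (k : ℕ) :
    (Finset.filter (fun x : Fin k ⊕ Fin k => ∃ y, x = Sum.inr y) Finset.univ).card = k := by
  have h : Finset.filter (fun x : Fin k ⊕ Fin k => ∃ y, x = Sum.inr y) Finset.univ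
      = Finset.univ.map ⟨Sum.inr, Sum.inr_injective⟩ := by
    ext x; cases x <;> simp [eq_comm]
  rw [h, Finset.card_map, Finset.card_univ, Fintype.card_fin]

theorem adj_mul_Ms (k : ℕ) :
    (doubleStar k k).adjMatrix ℂ * Ms k = Ms k * !![1, (k : ℂ); 1, 0] := by
  ext x j
  rw [Matrix.mul_apply, Matrix.mul_apply]
  simp only [SimpleGraph.adjMatrix_apply]
  fin_cases j <;> obtain (i | w | w) := x <;> (try fin_cases i) <;>
    simp [Fintype.sum_sum_type, Ms, svec, pvec, Fin.sum_univ_two,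
      SimpleGraph.adjMatrix_apply, doubleStar, SimpleGraph.fromRel_adj, Finset.sum_ite_eq] <;>
    first
      | decide
      | simp [cardL k, cardR k]

theorem adj_mul_Md (k : ℕ) :
    (doubleStar k k).adjMatrix ℂ * Md k = Md k * !![-1, (k : ℂ); 1, 0] := by
  ext x j
  rw [Matrix.mul_apply, Matrix.mul_apply]
  simp only [SimpleGraph.adjMatrix_apply]
  fin_cases j <;> obtain (i | w | w) := x <;> (try fin_cases i) <;>
    simp [Fintype.sum_sum_type, Md, dvec, qvec, Fin.sum_univ_two,
      SimpleGraph.adjMatrix_apply, doubleStar, SimpleGraph.fromRel_adj, Finset.sum_ite_eq]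

theorem sin_double_exp (w : ℂ) :
    Complex.exp (w * Complex.I) - Complex.exp (-w * Complex.I)
      = 2 * Complex.I * Complex.sin w := by
  rw [Complex.sin]
  ring_nf
  rw [Complex.I_sq]
  ring

set_option maxHeartbeats 1000000 in
/-- in the symmetric double star `S_{k,k}` there is no perfect state transfer
between the two central vertices at any time. -/
theorem no_pst_Skk_centres (k : ℕ) (hk : 0 < k) (τ : ℝ) :
    ¬ IsPST ((doubleStar k k).adjMatrix ℂ) (Sum.inl 0) (Sum.inl 1) τ := by
  rintro ⟨γ, hγ, hvec⟩
  set A := (doubleStar k k).adjMatrix ℂ with hA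
  set z : ℂ := Complex.I * (τ : ℂ) with hz
  -- basic numerology
  set Δ : ℝ := Real.sqrt (1 + 4 * k) with hΔ
  have h14k : (0:ℝ) < 1 + 4 * k := by positivity
  have hΔsq : Δ ^ 2 = 1 + 4 * k := Real.sq_sqrt (le_of_lt h14k)
  have hΔ1 : 1 < Δ := by
    have : (1:ℝ) < 1 + 4 * k := by
      have : (1:ℝ) ≤ k := by exact_mod_cast hk
      linarith
    calc (1:ℝ) = Real.sqrt 1 := (Real.sqrt_one).symm
      _ < Δ := by exact Real.sqrt_lt_sqrt (by norm_num) this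
  have hΔ0 : 0 < Δ := lt_trans one_pos hΔ1
  set l1 : ℝ := (1 + Δ) / 2 with hl1
  set l2 : ℝ := (1 - Δ) / 2 with hl2
  have hsum : l1 + l2 = 1 := by rw [hl1, hl2]; ring
  have hdiff : l1 - l2 = Δ := by rw [hl1, hl2]; ring
  have hprod : l1 * l2 = -(k:ℝ) := by
    rw [hl1, hl2]
    nlinarith [hΔsq]
  have hl1pos : 0 < l1 := by rw [hl1]; linarith
  have hl2neg : l2 < 0 := by rw [hl2]; linarith
  have hne : l1 ≠ l2 := by intro h; rw [h] at hdiff; simp at hdiff; linarith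
  set α : ℂ := (l1 : ℂ) with hα
  set β : ℂ := (l2 : ℂ) with hβ
  have hαβ : α ≠ β := by
    simp only [hα, hβ, ne_eq, Complex.ofReal_inj]; exact hne
  have hαβ' : -β ≠ -α := by
    intro h; apply hαβ; exact (neg_inj.mp h).symm
  have hdiffC : α - β = (Δ : ℂ) := by
    rw [hα, hβ, ← Complex.ofReal_sub, hdiff]
  -- the two companion matrices
  have hM1 : (!![1, (k : ℂ); 1, 0] : Matrix (Fin 2) (Fin 2) ℂ)
      = !![α + β, -(α * β); 1, 0] := by
    have e1 : α + β = 1 := by rw [hα, hβ, ← Complex.ofReal_add, hsum, Complex.ofReal_one]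
    have e2 : -(α * β) = (k : ℂ) := by
      rw [hα, hβ, ← Complex.ofReal_mul, hprod]
      push_cast
      ring
    rw [e1, e2]
  have hM2 : (!![-1, (k : ℂ); 1, 0] : Matrix (Fin 2) (Fin 2) ℂ)
      = !![(-β) + (-α), -((-β) * (-α)); 1, 0] := by
    have e1 : (-β) + (-α) = -1 := by
      rw [hα, hβ]
      rw [← Complex.ofReal_neg, ← Complex.ofReal_neg, ← Complex.ofReal_add,
        show (-1 : ℂ) = ((-1 : ℝ) : ℂ) by norm_num, Complex.ofReal_inj]
      linarith
    have e2 : -((-β) * (-α)) = (k : ℂ) := by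
      have : (-β) * (-α) = α * β := by ring
      rw [this]
      rw [hα, hβ, ← Complex.ofReal_mul, hprod]
      push_cast
      ring
    rw [e1, e2]
  -- intertwining
  have hs : exp (z • A) * Ms k = Ms k * exp (z • !![1, (k : ℂ); 1, 0]) := by
    apply exp_intertwine
    rw [Matrix.smul_mul, Matrix.mul_smul, adj_mul_Ms]
  have hd : exp (z • A) * Md k = Md k * exp (z • !![-1, (k : ℂ); 1, 0]) := by
    apply exp_intertwine
    rw [Matrix.smul_mul, Matrix.mul_smul, adj_mul_Md]
  -- entry extraction
  set E := exp (z • A) with hE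
  have hA1 : (E * Ms k) (Sum.inl 1) 0
      = E (Sum.inl 1) (Sum.inl 0) + E (Sum.inl 1) (Sum.inl 1) := by
    rw [Matrix.mul_apply, Fintype.sum_sum_type]
    simp [Ms, svec, Fin.sum_univ_two]
  have hA2 : (E * Md k) (Sum.inl 1) 0
      = E (Sum.inl 1) (Sum.inl 0) - E (Sum.inl 1) (Sum.inl 1) := by
    rw [Matrix.mul_apply, Fintype.sum_sum_type]
    simp [Md, dvec, Fin.sum_univ_two]
    ring
  have hB1 : (Ms k * exp (z • !![1, (k : ℂ); 1, 0])) (Sum.inl 1) 0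
      = exp (z • !![1, (k : ℂ); 1, 0]) 0 0 := by
    rw [Matrix.mul_apply, Fin.sum_univ_two]
    simp [Ms, svec, pvec]
  have hB2 : (Md k * exp (z • !![-1, (k : ℂ); 1, 0])) (Sum.inl 1) 0
      = -(exp (z • !![-1, (k : ℂ); 1, 0]) 0 0) := by
    rw [Matrix.mul_apply, Fin.sum_univ_two]
    simp [Md, dvec, qvec]
  -- companion values
  have hC1 : exp (z • !![1, (k : ℂ); 1, 0]) 0 0
      = (α * Complex.exp (z * α) - β * Complex.exp (z * β)) / (α - β) := by
    rw [hM1]; exact exp_companion α β z hαβ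
  have hC2 : exp (z • !![-1, (k : ℂ); 1, 0]) 0 0
      = ((-β) * Complex.exp (z * (-β)) - (-α) * Complex.exp (z * (-α))) / ((-β) - (-α)) := by
    rw [hM2]; exact exp_companion (-β) (-α) z hαβ'
  -- the value of γ
  have hγval : γ = E (Sum.inl 1) (Sum.inl 0) := by
    have h := congrFun hvec (Sum.inl 1)
    rw [Matrix.mulVec_single] at h
    simp only [mul_one, Pi.smul_apply, Pi.single_eq_same, smul_eq_mul] at h
    rw [← h]
    simp only [MulOpposite.op_one, one_smul]
    rfl
  have h2γ : 2 * γ = exp (z • !![1, (k : ℂ); 1, 0]) 0 0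
      - exp (z • !![-1, (k : ℂ); 1, 0]) 0 0 := by
    have e1 : E (Sum.inl 1) (Sum.inl 0) + E (Sum.inl 1) (Sum.inl 1)
        = exp (z • !![1, (k : ℂ); 1, 0]) 0 0 := by rw [← hA1, hE, hs, hB1]
    have e2 : E (Sum.inl 1) (Sum.inl 0) - E (Sum.inl 1) (Sum.inl 1)
        = -(exp (z • !![-1, (k : ℂ); 1, 0]) 0 0) := by rw [← hA2, hE, hd, hB2]
    rw [hγval]
    linear_combination e1 + e2
  -- simplify to sines
  set r : ℝ := l1 * Real.sin (τ * l1) - l2 * Real.sin (τ * l2) with hr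
  have hΔC0 : ((Δ:ℝ):ℂ) ≠ 0 := by
    simp only [ne_eq, Complex.ofReal_eq_zero]; exact ne_of_gt hΔ0
  have hγform : γ = Complex.I * ((r:ℝ):ℂ) / ((Δ:ℝ):ℂ) := by
    have hza : z * α = ((τ * l1 : ℝ) : ℂ) * Complex.I := by
      rw [hz, hα]; push_cast; ring
    have hza' : z * (-α) = -((τ * l1 : ℝ) : ℂ) * Complex.I := by
      rw [hz, hα]; push_cast; ring
    have hzb : z * β = ((τ * l2 : ℝ) : ℂ) * Complex.I := by
      rw [hz, hβ]; push_cast; ring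
    have hzb' : z * (-β) = -((τ * l2 : ℝ) : ℂ) * Complex.I := by
      rw [hz, hβ]; push_cast; ring
    have hba : (-β) - (-α) = (Δ : ℂ) := by rw [← hdiffC]; ring
    have hsin1 := sin_double_exp ((τ * l1 : ℝ) : ℂ)
    have hsin2 := sin_double_exp ((τ * l2 : ℝ) : ℂ)
    rw [← Complex.ofReal_sin] at hsin1 hsin2
    have expand : α * Complex.exp (((τ * l1 : ℝ) : ℂ) * Complex.I)
          - β * Complex.exp (((τ * l2 : ℝ) : ℂ) * Complex.I)
          - ((-β) * Complex.exp (-((τ * l2 : ℝ) : ℂ) * Complex.I)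
              - (-α) * Complex.exp (-((τ * l1 : ℝ) : ℂ) * Complex.I))
        = 2 * Complex.I * ((r:ℝ):ℂ) := by
      rw [hr, hα, hβ]
      push_cast at hsin1 hsin2 ⊢
      linear_combination ((l1:ℂ)) * hsin1 - ((l2:ℂ)) * hsin2
    have h2γ' : 2 * γ = (2 * Complex.I * ((r:ℝ):ℂ)) / ((Δ:ℝ):ℂ) := by
      rw [h2γ, hC1, hC2, hdiffC, hba, hza, hza', hzb, hzb', ← expand]
      ring
    field_simp at h2γ' ⊢
    linear_combination h2γ'
  -- norm computation
  have habs : |r| = Δ := by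
    have h1 : ‖γ‖ = |r| / Δ := by
      rw [hγform]
      simp [Real.norm_eq_abs,
        _root_.abs_of_pos hΔ0]
    rw [h1] at hγ
    field_simp at hγ
    linarith
  have hπ : (0:ℝ) < Real.pi := Real.pi_pos
  -- equality analysis
  rcases (abs_eq (le_of_lt hΔ0)).mp habs with hcase | hcase
  · -- r = Δ : both sines equal 1
    have key1 : l1 * (1 - Real.sin (τ * l1)) + (-l2) * (1 - Real.sin (τ * l2)) = 0 := by
      rw [hr] at hcase
      linear_combination hdiff - hcase
    have hb1 : 0 ≤ (-l2) * (1 - Real.sin (τ * l2)) :=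
      mul_nonneg (by linarith) (by linarith [Real.sin_le_one (τ * l2)])
    have hb2 : 0 ≤ l1 * (1 - Real.sin (τ * l1)) :=
      mul_nonneg (le_of_lt hl1pos) (by linarith [Real.sin_le_one (τ * l1)])
    have hs1 : Real.sin (τ * l1) = 1 := by
      nlinarith [Real.sin_le_one (τ * l1)]
    have hs2 : Real.sin (τ * l2) = 1 := by
      nlinarith [Real.sin_le_one (τ * l2)]
    obtain ⟨a, ha⟩ := Real.sin_eq_one_iff.mp hs1
    obtain ⟨b, hb⟩ := Real.sin_eq_one_iff.mp hs2
    have hτ : τ = Real.pi * (1 + 2 * ((a:ℝ) + (b:ℝ))) := by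
      have h := congrArg₂ (· + ·) ha hb
      have h2 : τ * l1 + τ * l2 = τ := by rw [← mul_add, hsum, mul_one]
      rw [h2] at h
      linarith [h]
    have hτΔ : τ * Δ = 2 * Real.pi * ((a:ℝ) - (b:ℝ)) := by
      have h := congrArg₂ (· - ·) ha hb
      have h2 : τ * l1 - τ * l2 = τ * Δ := by rw [← mul_sub, hdiff]
      rw [h2] at h
      linarith [h]
    rw [hτ] at hτΔ
    have hkey : Δ * (1 + 2 * ((a:ℝ) + (b:ℝ))) = 2 * ((a:ℝ) - (b:ℝ)) := by
      apply mul_left_cancel₀ (ne_of_gt hπ)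
      linear_combination hτΔ
    have hsq : ((1:ℝ) + 4 * k) * (1 + 2 * ((a:ℝ) + (b:ℝ)))^2 = 4 * ((a:ℝ) - (b:ℝ))^2 := by
      linear_combination (Δ * (1 + 2 * ((a:ℝ) + (b:ℝ))) + 2 * ((a:ℝ) - (b:ℝ))) * hkey
        - (1 + 2 * ((a:ℝ) + (b:ℝ)))^2 * hΔsq
    have hZ : ((1:ℤ) + 4 * k) * (1 + 2 * (a + b))^2 = 4 * (a - b)^2 := by
      exact_mod_cast hsq
    have hodd : Odd (((1:ℤ) + 4 * k) * (1 + 2 * (a + b))^2) :=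
      Odd.mul ⟨2 * k, by ring⟩ (Odd.pow ⟨a + b, by ring⟩)
    rw [hZ] at hodd
    exact (Int.not_odd_iff_even.mpr ⟨2 * (a - b)^2, by ring⟩) hodd
  · -- r = -Δ : both sines equal -1
    have key1 : l1 * (1 + Real.sin (τ * l1)) + (-l2) * (1 + Real.sin (τ * l2)) = 0 := by
      rw [hr] at hcase
      linear_combination hdiff + hcase
    have hb1 : 0 ≤ (-l2) * (1 + Real.sin (τ * l2)) :=
      mul_nonneg (by linarith) (by linarith [Real.neg_one_le_sin (τ * l2)])
    have hb2 : 0 ≤ l1 * (1 + Real.sin (τ * l1)) :=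
      mul_nonneg (le_of_lt hl1pos) (by linarith [Real.neg_one_le_sin (τ * l1)])
    have hs1 : Real.sin (τ * l1) = -1 := by
      nlinarith [Real.neg_one_le_sin (τ * l1)]
    have hs2 : Real.sin (τ * l2) = -1 := by
      nlinarith [Real.neg_one_le_sin (τ * l2)]
    obtain ⟨a, ha⟩ := Real.sin_eq_neg_one_iff.mp hs1
    obtain ⟨b, hb⟩ := Real.sin_eq_neg_one_iff.mp hs2
    have hτ : τ = Real.pi * (-1 + 2 * ((a:ℝ) + (b:ℝ))) := by
      have h := congrArg₂ (· + ·) ha hb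
      have h2 : τ * l1 + τ * l2 = τ := by rw [← mul_add, hsum, mul_one]
      rw [h2] at h
      linarith [h]
    have hτΔ : τ * Δ = 2 * Real.pi * ((a:ℝ) - (b:ℝ)) := by
      have h := congrArg₂ (· - ·) ha hb
      have h2 : τ * l1 - τ * l2 = τ * Δ := by rw [← mul_sub, hdiff]
      rw [h2] at h
      linarith [h]
    rw [hτ] at hτΔ
    have hkey : Δ * (-1 + 2 * ((a:ℝ) + (b:ℝ))) = 2 * ((a:ℝ) - (b:ℝ)) := by
      apply mul_left_cancel₀ (ne_of_gt hπ)
      linear_combination hτΔ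
    have hsq : ((1:ℝ) + 4 * k) * (-1 + 2 * ((a:ℝ) + (b:ℝ)))^2 = 4 * ((a:ℝ) - (b:ℝ))^2 := by
      linear_combination (Δ * (-1 + 2 * ((a:ℝ) + (b:ℝ))) + 2 * ((a:ℝ) - (b:ℝ))) * hkey
        - (-1 + 2 * ((a:ℝ) + (b:ℝ)))^2 * hΔsq
    have hZ : ((1:ℤ) + 4 * k) * (-1 + 2 * (a + b))^2 = 4 * (a - b)^2 := by
      exact_mod_cast hsq
    have hodd : Odd (((1:ℤ) + 4 * k) * (-1 + 2 * (a + b))^2) :=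
      Odd.mul ⟨2 * k, by ring⟩ (Odd.pow ⟨a + b - 1, by ring⟩)
    rw [hZ] at hodd
    exact (Int.not_odd_iff_even.mpr ⟨2 * (a - b)^2, by ring⟩) hodd
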